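/- Let V be a finite-dimensional real inner product space and let J : V → V be a linear isometry satisfying J ∘ J = -id. Define the bilinear form ω(v, w) := ⟪J v, w⟫, and for a subspace W ⊆ V define its ω-orthogonal W^ω := {v ∈ V : ω(w, v) = 0 for all w ∈ W}. Suppose W ⊆ V is a subspace that is ω-isotropic, i.e. ω(w, w') = 0 for all w, w' ∈ W, and let H := W^ω ∩ W^⊥ (the intersection of the ω-orthogonal of W with the inner-product orthogonal complement of W). Then V is the internal direct sum V = H ⊕ W ⊕ J(W), and H is J-invariant: J(H) = H. -/

import Mathlib

/-- Kähler reduction, linear-algebra core: if `W` is an `ω`-isotropic subspace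
of a finite-dimensional real inner ℝ product space with compatible complex
structure `J` (where `ω(v,w) = ⟪Jv, w⟫`), and `H := W^ω ∩ W^⊥`, then
`V = H ⊕ W ⊕ J(W)` and `H` is `J`-invariant. -/
theorem kahler_reduction_splitting (V : Type*) [NormedAddCommGroup V]
    [InnerProductSpace ℝ V] [FiniteDimensional ℝ V] (J : V →ₗ[ℝ] V)
    (hJiso : ∀ v w : V, (inner ℝ (J v) (J w) : ℝ) = inner ℝ v w)
    (hJ2 : ∀ v : V, J (J v) = -v) (W : Submodule ℝ V)
    (hisotropic : ∀ w ∈ W, ∀ w' ∈ W, (inner ℝ (J w) w' : ℝ) = 0) :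
    (∀ v : V, ∃ h ∈ {v : V | ∀ w ∈ W, (inner ℝ (J w) v : ℝ) = 0} ∩ (Wᗮ : Set V),
        ∃ w₁ ∈ W, ∃ w₂ ∈ W, v = h + w₁ + J w₂) ∧
    (∀ h ∈ {v : V | ∀ w ∈ W, (inner ℝ (J w) v : ℝ) = 0} ∩ (Wᗮ : Set V),
        ∀ w₁ ∈ W, ∀ w₂ ∈ W, h + w₁ + J w₂ = 0 → h = 0 ∧ w₁ = 0 ∧ w₂ = 0) ∧
    (J '' ({v : V | ∀ w ∈ W, (inner ℝ (J w) v : ℝ) = 0} ∩ (Wᗮ : Set V)) =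
      {v : V | ∀ w ∈ W, (inner ℝ (J w) v : ℝ) = 0} ∩ (Wᗮ : Set V)) := by
  -- skew-adjointness of J
  have hskew : ∀ v w : V, (inner ℝ (J v) w : ℝ) = -inner ℝ v (J w) := by
    intro v w
    have h := hJiso v (J w)
    rw [hJ2 w, inner_neg_right] at h
    linarith
  have hmemo : ∀ x : V, x ∈ (Wᗮ : Set V) ↔ ∀ w ∈ W, (inner ℝ w x : ℝ) = 0 :=
    fun x => Submodule.mem_orthogonal W x
  set U : Submodule ℝ V := W ⊔ W.map J with hU
  -- membership in the set H equals membership in Uᗮ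
  have hHset : ∀ v : V,
      (v ∈ {v : V | ∀ w ∈ W, (inner ℝ (J w) v : ℝ) = 0} ∩ (Wᗮ : Set V)) ↔ v ∈ Uᗮ := by
    intro v
    constructor
    · rintro ⟨h1, h2⟩
      rw [Submodule.mem_orthogonal]
      intro u hu
      rw [Submodule.mem_sup] at hu
      obtain ⟨y, hy, z, hz, rfl⟩ := hu
      obtain ⟨w, hw, rfl⟩ := Submodule.mem_map.1 hz
      rw [inner_add_left, h1 w hw, (hmemo v).1 h2 y hy]
      ring
    · intro hv
      rw [Submodule.mem_orthogonal] at hv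
      constructor
      · intro w hw
        exact hv (J w) (Submodule.mem_sup_right (Submodule.mem_map_of_mem hw))
      · rw [hmemo]
        intro w hw
        exact hv w (Submodule.mem_sup_left hw)
  -- J preserves the set H
  have hJH : ∀ v : V, (v ∈ {v : V | ∀ w ∈ W, (inner ℝ (J w) v : ℝ) = 0} ∩ (Wᗮ : Set V)) →
      J v ∈ {v : V | ∀ w ∈ W, (inner ℝ (J w) v : ℝ) = 0} ∩ (Wᗮ : Set V) := by
    rintro v ⟨h1, h2⟩
    constructor
    · intro w hw
      rw [hJiso]
      exact (hmemo v).1 h2 w hw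
    · rw [hmemo]
      intro w hw
      have := hskew w v
      have h0 := h1 w hw
      rw [h0] at this
      linarith [real_inner_comm w (J v), this]
  refine ⟨?_, ?_, ?_⟩
  · -- existence of decomposition
    intro v
    obtain ⟨u, hu, h, hh, rfl⟩ := U.exists_add_mem_mem_orthogonal v
    rw [Submodule.mem_sup] at hu
    obtain ⟨w₁, hw₁, z, hz, rfl⟩ := hu
    obtain ⟨w₂, hw₂, rfl⟩ := Submodule.mem_map.1 hz
    exact ⟨h, (hHset h).2 hh, w₁, hw₁, w₂, hw₂, by abel⟩
  · -- uniqueness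
    intro h hh w₁ hw₁ w₂ hw₂ heq
    have hhU : h ∈ Uᗮ := (hHset h).1 hh
    have huU : w₁ + J w₂ ∈ U :=
      Submodule.add_mem _ (Submodule.mem_sup_left hw₁)
        (Submodule.mem_sup_right (Submodule.mem_map_of_mem hw₂))
    have hhU' : h ∈ U := by
      have h3 : h + (w₁ + J w₂) = 0 := by rw [← heq]; abel
      rw [eq_neg_of_add_eq_zero_left h3]
      exact Submodule.neg_mem _ huU
    have hh0 : h = 0 := by
      have : h ∈ U ⊓ Uᗮ := ⟨hhU', hhU⟩
      rwa [Submodule.inf_orthogonal_eq_bot, Submodule.mem_bot] at this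
    have hsum : w₁ + J w₂ = 0 := by
      rw [hh0] at heq; simpa using heq
    have hw10 : w₁ = 0 := by
      have h1 : (inner ℝ w₁ (w₁ + J w₂) : ℝ) = 0 := by rw [hsum, inner_zero_right]
      rw [inner_add_right] at h1
      have h2 : (inner ℝ w₁ (J w₂) : ℝ) = 0 := by
        rw [real_inner_comm]; exact hisotropic w₂ hw₂ w₁ hw₁
      rw [h2, add_zero] at h1
      exact inner_self_eq_zero.1 h1
    have hJw20 : J w₂ = 0 := by rw [hw10, zero_add] at hsum; exact hsum
    have hw20 : w₂ = 0 := by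
      have := hJ2 w₂
      rw [hJw20, map_zero] at this
      simpa using this.symm
    exact ⟨hh0, hw10, hw20⟩
  · -- J-invariance
    ext v
    constructor
    · rintro ⟨u, hu, rfl⟩
      exact hJH u hu
    · intro hv
      refine ⟨-(J v), ?_, ?_⟩
      · have := hJH v hv
        obtain ⟨h1, h2⟩ := this
        constructor
        · intro w hw
          rw [inner_neg_right, h1 w hw, neg_zero]
        · exact Submodule.neg_mem _ h2
      · rw [map_neg, hJ2, neg_neg]
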